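/- arXiv:2106.05641 — 2 statements merged into one kernel-verified Lean document; each statement's English description precedes it below -/
import Mathlib

section
/- Let E ⊆ ℝ^N be a measurable set such that P^γ_{s₀}(E) < ∞ for some s₀ ∈ (0,1), where P^γ_s(E) denotes the fractional Gaussian s-perimeter in Ω = ℝ^N. Then lim_{s→0⁺} s·P^γ_s(E) = 2γ(E)γ(Eᶜ). -/
open MeasureTheory Real Set Filter

noncomputable def gaussDensity (N : ℕ) (x : EuclideanSpace ℝ (Fin N)) : ℝ :=
  (2 * π) ^ (-(N : ℝ) / 2) * Real.exp (-‖x‖ ^ 2 / 2)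

noncomputable def gaussMeasure (N : ℕ) : Measure (EuclideanSpace ℝ (Fin N)) :=
  volume.withDensity fun x => ENNReal.ofReal (gaussDensity N x)

noncomputable def mehler (N : ℕ) (t : ℝ) (x y : EuclideanSpace ℝ (Fin N)) : ℝ :=
  (1 - Real.exp (-2 * t)) ^ (-(N : ℝ) / 2) *
    Real.exp (-(Real.exp (-2 * t) * ‖x‖ ^ 2 - 2 * Real.exp (-t) * (inner ℝ x y : ℝ) +
      Real.exp (-2 * t) * ‖y‖ ^ 2) / (2 * (1 - Real.exp (-2 * t))))

noncomputable def Kker (N : ℕ) (σ : ℝ) (x y : EuclideanSpace ℝ (Fin N)) : ENNReal :=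
  ∫⁻ t in Ioi (0 : ℝ), ENNReal.ofReal (mehler N t x y * t ^ (-σ / 2 - 1))

noncomputable def Lgamma (N : ℕ) (s : ℝ) (A B : Set (EuclideanSpace ℝ (Fin N))) : ENNReal :=
  ∫⁻ x in A, ∫⁻ y in B, Kker N s x y ∂(gaussMeasure N) ∂(gaussMeasure N)

noncomputable def Pgamma (N : ℕ) (s : ℝ) (E Ω : Set (EuclideanSpace ℝ (Fin N))) : ENNReal :=
  Lgamma N s (E ∩ Ω) (Eᶜ ∩ Ω) + Lgamma N s (E ∩ Ω) (Eᶜ ∩ Ωᶜ) + Lgamma N s (E ∩ Ωᶜ) (Eᶜ ∩ Ω)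

/-- bound for mehler on t ≥ 1 -/
noncomputable def Bfn (N : ℕ) (x y : EuclideanSpace ℝ (Fin N)) : ℝ :=
  (1 - Real.exp (-2)) ^ (-(N : ℝ) / 2) * Real.exp (2 * Real.exp (-1) * (‖x‖ * ‖y‖))

lemma exp_neg_two_le_half : Real.exp (-2) ≤ 1 / 2 := by
  have h2 : (2:ℝ) ≤ Real.exp 2 := by nlinarith [Real.add_one_le_exp (2 : ℝ)]
  rw [Real.exp_neg, inv_eq_one_div]
  rw [div_le_div_iff₀ (by positivity) (by norm_num)]
  linarith

lemma mehler_nonneg (N : ℕ) {t : ℝ} (ht : 0 < t) (x y : EuclideanSpace ℝ (Fin N)) :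
    0 ≤ mehler N t x y := by
  have h1 : 0 < 1 - Real.exp (-2 * t) := by
    have : Real.exp (-2 * t) < 1 := Real.exp_lt_one_iff.2 (by nlinarith)
    linarith
  exact mul_nonneg (Real.rpow_nonneg h1.le _) (Real.exp_nonneg _)

lemma mehler_le_Bfn (N : ℕ) {t : ℝ} (ht : 1 ≤ t) (x y : EuclideanSpace ℝ (Fin N)) :
    mehler N t x y ≤ Bfn N x y := by
  have ht0 : (0:ℝ) < t := by linarith
  have he2 : Real.exp (-2 * t) ≤ Real.exp (-2) := by
    apply Real.exp_le_exp.2; nlinarith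
  have h2 : 0 < 1 - Real.exp (-2) := by
    have := exp_neg_two_le_half; linarith
  have h1 : 0 < 1 - Real.exp (-2 * t) := by linarith
  have hbase : (1 - Real.exp (-2 * t)) ^ (-(N : ℝ) / 2) ≤ (1 - Real.exp (-2)) ^ (-(N : ℝ) / 2) := by
    apply Real.rpow_le_rpow_of_nonpos h2 (by linarith)
    have : (0:ℝ) ≤ (N : ℝ) := Nat.cast_nonneg N
    linarith [this]
  have hhalf : (1:ℝ)/2 ≤ 1 - Real.exp (-2 * t) := by
    have := exp_neg_two_le_half; linarith
  have hinner : (inner ℝ x y : ℝ) ≤ ‖x‖ * ‖y‖ := real_inner_le_norm x y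
  have hexparg : -(Real.exp (-2 * t) * ‖x‖ ^ 2 - 2 * Real.exp (-t) * (inner ℝ x y : ℝ) +
      Real.exp (-2 * t) * ‖y‖ ^ 2) / (2 * (1 - Real.exp (-2 * t)))
      ≤ 2 * Real.exp (-1) * (‖x‖ * ‖y‖) := by
    have hnum : -(Real.exp (-2 * t) * ‖x‖ ^ 2 - 2 * Real.exp (-t) * (inner ℝ x y : ℝ) +
        Real.exp (-2 * t) * ‖y‖ ^ 2) ≤ 2 * Real.exp (-t) * (‖x‖ * ‖y‖) := by
      have hx2 : 0 ≤ Real.exp (-2 * t) * ‖x‖ ^ 2 := by positivity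
      have hy2 : 0 ≤ Real.exp (-2 * t) * ‖y‖ ^ 2 := by positivity
      nlinarith [Real.exp_pos (-t)]
    have hden : 1 ≤ 2 * (1 - Real.exp (-2 * t)) := by linarith
    calc -(Real.exp (-2 * t) * ‖x‖ ^ 2 - 2 * Real.exp (-t) * (inner ℝ x y : ℝ) +
        Real.exp (-2 * t) * ‖y‖ ^ 2) / (2 * (1 - Real.exp (-2 * t)))
        ≤ (2 * Real.exp (-t) * (‖x‖ * ‖y‖)) / (2 * (1 - Real.exp (-2 * t))) :=
          (div_le_div_iff_of_pos_right (by linarith)).2 hnum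
      _ ≤ (2 * Real.exp (-t) * (‖x‖ * ‖y‖)) := div_le_self (by positivity) hden
      _ ≤ 2 * Real.exp (-1) * (‖x‖ * ‖y‖) := by
          have h : Real.exp (-t) ≤ Real.exp (-1) := Real.exp_le_exp.2 (by linarith)
          have hm : (0:ℝ) ≤ ‖x‖ * ‖y‖ := by positivity
          nlinarith [mul_le_mul_of_nonneg_right h hm]
  calc mehler N t x y ≤ (1 - Real.exp (-2)) ^ (-(N : ℝ) / 2) *
        Real.exp (-(Real.exp (-2 * t) * ‖x‖ ^ 2 - 2 * Real.exp (-t) * (inner ℝ x y : ℝ) +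
          Real.exp (-2 * t) * ‖y‖ ^ 2) / (2 * (1 - Real.exp (-2 * t)))) := by
        exact mul_le_mul_of_nonneg_right hbase (Real.exp_nonneg _)
    _ ≤ Bfn N x y := by
        unfold Bfn
        exact mul_le_mul_of_nonneg_left (Real.exp_le_exp.2 hexparg) (Real.rpow_nonneg h2.le _)

lemma tendsto_exp_neg_mul_atTop (c : ℝ) (hc : 0 < c) :
    Tendsto (fun t : ℝ => Real.exp (-c * t)) atTop (nhds 0) := by
  apply Real.tendsto_exp_atBot.comp
  have : Tendsto (fun t : ℝ => c * t) atTop atTop :=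
    Tendsto.const_mul_atTop hc tendsto_id
  have h3 : Tendsto (fun t : ℝ => -(c * t)) atTop atBot := tendsto_neg_atTop_atBot.comp this
  rw [show (fun t : ℝ => -(c * t)) = (HMul.hMul (-c)) from funext fun t => by ring] at h3
  exact h3

lemma mehler_tendsto_one (N : ℕ) (x y : EuclideanSpace ℝ (Fin N)) :
    Tendsto (fun t => mehler N t x y) atTop (nhds 1) := by
  have h2 : Tendsto (fun t : ℝ => Real.exp (-2 * t)) atTop (nhds 0) :=
    tendsto_exp_neg_mul_atTop 2 two_pos
  have h1 : Tendsto (fun t : ℝ => Real.exp (-t)) atTop (nhds 0) := by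
    simpa using tendsto_exp_neg_mul_atTop 1 one_pos
  have hbase : Tendsto (fun t : ℝ => (1 - Real.exp (-2 * t)) ^ (-(N : ℝ) / 2))
      atTop (nhds 1) := by
    have : Tendsto (fun t : ℝ => 1 - Real.exp (-2 * t)) atTop (nhds 1) := by
      simpa using (tendsto_const_nhds.sub h2)
    have := this.rpow_const (p := -(N : ℝ) / 2) (Or.inl one_ne_zero)
    simpa using this
  have hexp : Tendsto (fun t : ℝ =>
      Real.exp (-(Real.exp (-2 * t) * ‖x‖ ^ 2 - 2 * Real.exp (-t) * (inner ℝ x y : ℝ) +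
        Real.exp (-2 * t) * ‖y‖ ^ 2) / (2 * (1 - Real.exp (-2 * t))))) atTop (nhds 1) := by
    have hnum : Tendsto (fun t : ℝ =>
        -(Real.exp (-2 * t) * ‖x‖ ^ 2 - 2 * Real.exp (-t) * (inner ℝ x y : ℝ) +
          Real.exp (-2 * t) * ‖y‖ ^ 2)) atTop (nhds 0) := by
      have := ((h2.mul_const (‖x‖^2)).sub ((h1.const_mul 2).mul_const (inner ℝ x y : ℝ))).add
        (h2.mul_const (‖y‖^2))
      simpa using this.neg
    have hden : Tendsto (fun t : ℝ => 2 * (1 - Real.exp (-2 * t))) atTop (nhds 2) := by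
      have : Tendsto (fun t : ℝ => 1 - Real.exp (-2 * t)) atTop (nhds 1) := by
        simpa using (tendsto_const_nhds.sub h2)
      simpa using this.const_mul 2
    have := hnum.div hden two_ne_zero
    simpa [Function.comp_def] using (Real.continuous_exp.continuousAt (x := 0)).tendsto.comp (by simpa [Pi.div_def] using this)
  unfold mehler
  simpa only [one_mul, mul_one] using hbase.mul hexp

lemma measurable_rpow_const (c : ℝ) : Measurable fun x : ℝ => x ^ c := by
  have heq : (fun x : ℝ => x ^ c) = fun x : ℝ =>
      if x = 0 then (if c = 0 then 1 else 0)
      else Real.exp (Real.log x * c) * (if x < 0 then Real.cos (c * π) else 1) := by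
    funext x
    rcases lt_trichotomy x 0 with h | h | h
    · rw [Real.rpow_def_of_neg h]
      simp [h.ne, h, mul_comm]
    · subst h
      by_cases hc : c = 0 <;> simp [hc, Real.zero_rpow, Real.rpow_zero]
    · rw [Real.rpow_def_of_pos h]
      simp [h.ne', not_lt.2 h.le]
  rw [heq]
  refine Measurable.ite (measurableSet_eq) measurable_const ?_
  exact ((Real.measurable_log.mul measurable_const).exp).mul
    (Measurable.ite (measurableSet_lt measurable_id measurable_const)
      measurable_const measurable_const)

lemma mehler_uncurry_measurable (N : ℕ) (s : ℝ) :
    Measurable (fun p : (EuclideanSpace ℝ (Fin N) × EuclideanSpace ℝ (Fin N)) × ℝ =>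
      ENNReal.ofReal (mehler N p.2 p.1.1 p.1.2 * p.2 ^ (-s / 2 - 1))) := by
  apply ENNReal.measurable_ofReal.comp
  apply Measurable.mul
  · unfold mehler
    apply Measurable.mul
    · exact (measurable_rpow_const _).comp
        (measurable_const.sub ((measurable_snd.const_mul (-2)).exp))
    · apply Real.measurable_exp.comp
      apply Measurable.div
      · apply Measurable.neg
        apply Measurable.add
        · apply Measurable.sub
          · exact ((measurable_snd.const_mul (-2)).exp).mul
              ((measurable_fst.fst.norm).pow measurable_const)
          · exact (measurable_snd.neg.exp.const_mul 2).mul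
              ((continuous_inner.measurable).comp
                (measurable_fst.fst.prodMk measurable_fst.snd))
        · exact ((measurable_snd.const_mul (-2)).exp).mul
            ((measurable_fst.snd.norm).pow measurable_const)
      · exact (measurable_const.sub ((measurable_snd.const_mul (-2)).exp)).const_mul 2
  · exact (measurable_rpow_const _).comp measurable_snd

lemma lintegral_rpow_Ioi {s T : ℝ} (hs : 0 < s) (hT : 0 < T) :
    ∫⁻ t in Ioi T, ENNReal.ofReal (t ^ (-s / 2 - 1))
      = ENNReal.ofReal (2 / s * T ^ (-s / 2)) := by
  have hlt : -s / 2 - 1 < -1 := by linarith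
  have hint : IntegrableOn (fun t : ℝ => t ^ (-s / 2 - 1)) (Ioi T) :=
    integrableOn_Ioi_rpow_of_lt hlt hT
  have hnn : 0 ≤ᵐ[volume.restrict (Ioi T)] fun t : ℝ => t ^ (-s / 2 - 1) := by
    refine (ae_restrict_iff' measurableSet_Ioi).2 (ae_of_all _ fun t ht => ?_)
    exact Real.rpow_nonneg (le_of_lt (hT.trans ht)) _
  rw [← ofReal_integral_eq_lintegral_ofReal hint hnn]
  rw [integral_Ioi_rpow_of_lt hlt hT]
  congr 1
  rw [show -s / 2 - 1 + 1 = -s / 2 by ring]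
  field_simp

lemma kker_split (N : ℕ) (s : ℝ) {T : ℝ} (hT : 0 < T) (x y : EuclideanSpace ℝ (Fin N)) :
    Kker N s x y = (∫⁻ t in Ioc 0 T, ENNReal.ofReal (mehler N t x y * t ^ (-s / 2 - 1)))
      + ∫⁻ t in Ioi T, ENNReal.ofReal (mehler N t x y * t ^ (-s / 2 - 1)) := by
  unfold Kker
  rw [← lintegral_union measurableSet_Ioi (Ioc_disjoint_Ioi le_rfl),
    Ioc_union_Ioi_eq_Ioi hT.le]

lemma lint_Ioc01_le (N : ℕ) {s s₀ : ℝ} (hs : 0 < s) (hss₀ : s ≤ s₀)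
    (x y : EuclideanSpace ℝ (Fin N)) :
    ∫⁻ t in Ioc (0:ℝ) 1, ENNReal.ofReal (mehler N t x y * t ^ (-s / 2 - 1))
      ≤ Kker N s₀ x y := by
  refine le_trans (setLIntegral_mono' measurableSet_Ioc fun t ht => ?_)
    (lintegral_mono_set Ioc_subset_Ioi_self)
  apply ENNReal.ofReal_le_ofReal
  apply mul_le_mul_of_nonneg_left ?_ (mehler_nonneg N ht.1 x y)
  exact Real.rpow_le_rpow_of_exponent_ge ht.1 ht.2 (by linarith)

lemma lint_Ioc1T_le (N : ℕ) (s : ℝ) {T : ℝ} (hT : 1 ≤ T)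
    (x y : EuclideanSpace ℝ (Fin N)) (hs : 0 < s) :
    ∫⁻ t in Ioc (1:ℝ) T, ENNReal.ofReal (mehler N t x y * t ^ (-s / 2 - 1))
      ≤ ENNReal.ofReal (Bfn N x y) * ENNReal.ofReal T := by
  have h1 : ∫⁻ t in Ioc (1:ℝ) T, ENNReal.ofReal (mehler N t x y * t ^ (-s / 2 - 1))
      ≤ ∫⁻ _ in Ioc (1:ℝ) T, ENNReal.ofReal (Bfn N x y) := by
    refine setLIntegral_mono' measurableSet_Ioc fun t ht => ?_
    apply ENNReal.ofReal_le_ofReal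
    have h2 : t ^ (-s / 2 - 1) ≤ 1 :=
      Real.rpow_le_one_of_one_le_of_nonpos ht.1.le (by linarith)
    have h3 := mehler_le_Bfn N ht.1.le x y
    have h4 : 0 ≤ mehler N t x y := mehler_nonneg N (lt_trans one_pos ht.1) x y
    calc mehler N t x y * t ^ (-s / 2 - 1) ≤ mehler N t x y * 1 :=
          mul_le_mul_of_nonneg_left h2 h4
      _ = mehler N t x y := mul_one _
      _ ≤ Bfn N x y := h3
  refine h1.trans ?_
  rw [setLIntegral_const, Real.volume_Ioc]
  exact mul_le_mul_right (ENNReal.ofReal_le_ofReal (by linarith)) _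

lemma lint_IoiT_le (N : ℕ) {s T b : ℝ} (hT : 0 < T) (hs : 0 < s)
    (x y : EuclideanSpace ℝ (Fin N)) (hbnn : 0 ≤ b)
    (hb : ∀ t, T ≤ t → mehler N t x y ≤ b) :
    ∫⁻ t in Ioi T, ENNReal.ofReal (mehler N t x y * t ^ (-s / 2 - 1))
      ≤ ENNReal.ofReal b * ENNReal.ofReal (2 / s * T ^ (-s / 2)) := by
  have h1 : ∫⁻ t in Ioi T, ENNReal.ofReal (mehler N t x y * t ^ (-s / 2 - 1))
      ≤ ∫⁻ t in Ioi T, ENNReal.ofReal b * ENNReal.ofReal (t ^ (-s / 2 - 1)) := by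
    refine setLIntegral_mono' measurableSet_Ioi fun t ht => ?_
    rw [← ENNReal.ofReal_mul hbnn]
    apply ENNReal.ofReal_le_ofReal
    exact mul_le_mul_of_nonneg_right (hb t (le_of_lt ht))
      (Real.rpow_nonneg (le_of_lt (hT.trans ht)) _)
  refine h1.trans ?_
  rw [lintegral_const_mul' _ _ ENNReal.ofReal_ne_top, lintegral_rpow_Ioi hs hT]

lemma lint_IoiT_ge (N : ℕ) {s T b : ℝ} (hT : 0 < T) (hs : 0 < s)
    (x y : EuclideanSpace ℝ (Fin N)) (hbnn : 0 ≤ b)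
    (hb : ∀ t, T ≤ t → b ≤ mehler N t x y) :
    ENNReal.ofReal b * ENNReal.ofReal (2 / s * T ^ (-s / 2))
      ≤ ∫⁻ t in Ioi T, ENNReal.ofReal (mehler N t x y * t ^ (-s / 2 - 1)) := by
  rw [← lintegral_rpow_Ioi hs hT, ← lintegral_const_mul' _ _ ENNReal.ofReal_ne_top]
  refine setLIntegral_mono' measurableSet_Ioi fun t ht => ?_
  rw [← ENNReal.ofReal_mul hbnn]
  apply ENNReal.ofReal_le_ofReal
  exact mul_le_mul_of_nonneg_right (hb t (le_of_lt ht))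
    (Real.rpow_nonneg (le_of_lt (hT.trans ht)) _)

lemma mul_ofReal_two_div (s c : ℝ) (hs : 0 < s) (hc : 0 ≤ c) :
    ENNReal.ofReal s * ENNReal.ofReal (2 / s * c) = ENNReal.ofReal (2 * c) := by
  rw [← ENNReal.ofReal_mul hs.le]
  congr 1
  field_simp

lemma key_pointwise (N : ℕ) {s₀ : ℝ} (hs₀ : 0 < s₀) (x y : EuclideanSpace ℝ (Fin N))
    (hfinxy : Kker N s₀ x y ≠ ⊤) :
    Tendsto (fun s : ℝ => ENNReal.ofReal s * Kker N s x y)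
      (nhdsWithin 0 (Ioi 0)) (nhds 2) := by
  rw [ENNReal.tendsto_nhds (by norm_num : (2 : ENNReal) ≠ ⊤)]
  intro ε hε
  -- replace ε by εr := min ε 1
  set εr : ENNReal := min ε 1 with hεr_def
  have hεr_pos : 0 < εr := lt_min hε zero_lt_one
  have hεr_le : εr ≤ ε := min_le_left _ _
  have hεr_ne_top : εr ≠ ⊤ := by
    exact ne_top_of_le_ne_top (by norm_num) (min_le_right _ _)
  set d : ℝ := εr.toReal with hd_def
  have hd_pos : 0 < d := ENNReal.toReal_pos hεr_pos.ne' hεr_ne_top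
  have hd_le1 : d ≤ 1 := by
    have := ENNReal.toReal_mono (by norm_num) (min_le_right ε 1)
    simpa using this
  have hofReal_d : ENNReal.ofReal d = εr := ENNReal.ofReal_toReal hεr_ne_top
  set δ : ℝ := d / 4 with hδ_def
  have hδ_pos : 0 < δ := by positivity
  have hδ_le : δ ≤ 1 / 4 := by rw [hδ_def]; linarith
  -- choose T
  have hup : ∀ᶠ t in atTop, mehler N t x y ≤ 1 + δ :=
    (mehler_tendsto_one N x y).eventually_le_const (by linarith)
  have hlo : ∀ᶠ t in atTop, 1 - δ ≤ mehler N t x y :=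
    (mehler_tendsto_one N x y).eventually_const_le (by linarith)
  obtain ⟨T₀, hT₀⟩ := (hup.and hlo).exists_forall_of_atTop
  set T : ℝ := max T₀ 1 with hT_def
  have hT1 : (1:ℝ) ≤ T := le_max_right _ _
  have hT0 : (0:ℝ) < T := lt_of_lt_of_le one_pos hT1
  have hbnd : ∀ t, T ≤ t → (mehler N t x y ≤ 1 + δ ∧ 1 - δ ≤ mehler N t x y) :=
    fun t ht => hT₀ t (le_trans (le_max_left _ _) ht)
  -- the constant C
  set C : ENNReal := Kker N s₀ x y + ENNReal.ofReal (Bfn N x y) * ENNReal.ofReal T with hC_def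
  have hC_ne_top : C ≠ ⊤ :=
    ENNReal.add_ne_top.2 ⟨hfinxy, ENNReal.mul_ne_top ENNReal.ofReal_ne_top ENNReal.ofReal_ne_top⟩
  -- upper bound function
  have hUb : ∀ s : ℝ, 0 < s → s ≤ s₀ →
      ENNReal.ofReal s * Kker N s x y ≤ ENNReal.ofReal s * C
        + ENNReal.ofReal (1 + δ) * ENNReal.ofReal (2 * T ^ (-s / 2)) := by
    intro s hs hss₀
    rw [kker_split N s hT0 x y, mul_add]
    refine add_le_add ?_ ?_
    · refine mul_le_mul_right ?_ _
      have hsplit : ∫⁻ t in Ioc (0:ℝ) T, ENNReal.ofReal (mehler N t x y * t ^ (-s / 2 - 1))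
          ≤ (∫⁻ t in Ioc (0:ℝ) 1, ENNReal.ofReal (mehler N t x y * t ^ (-s / 2 - 1)))
            + ∫⁻ t in Ioc (1:ℝ) T, ENNReal.ofReal (mehler N t x y * t ^ (-s / 2 - 1)) := by
        refine le_trans (lintegral_mono_set ?_) (lintegral_union_le _ _ _)
        rw [Ioc_union_Ioc_eq_Ioc zero_le_one hT1]
      exact hsplit.trans (add_le_add (lint_Ioc01_le N hs hss₀ x y)
        (lint_Ioc1T_le N s hT1 x y hs))
    · have h2 := lint_IoiT_le N hT0 hs x y (by linarith : (0:ℝ) ≤ 1 + δ)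
        (fun t ht => (hbnd t ht).1)
      refine (mul_le_mul_right h2 _).trans_eq ?_
      rw [mul_left_comm, mul_ofReal_two_div s _ hs (by positivity)]
  -- lower bound function
  have hLb : ∀ s : ℝ, 0 < s →
      ENNReal.ofReal (1 - δ) * ENNReal.ofReal (2 * T ^ (-s / 2))
        ≤ ENNReal.ofReal s * Kker N s x y := by
    intro s hs
    have h2 := lint_IoiT_ge N hT0 hs x y (by linarith : (0:ℝ) ≤ 1 - δ)
      (fun t ht => (hbnd t ht).2)
    calc ENNReal.ofReal (1 - δ) * ENNReal.ofReal (2 * T ^ (-s / 2))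
        = ENNReal.ofReal s * (ENNReal.ofReal (1 - δ)
            * ENNReal.ofReal (2 / s * T ^ (-s / 2))) := by
          rw [mul_left_comm, mul_ofReal_two_div s _ hs (Real.rpow_nonneg hT0.le _)]
      _ ≤ ENNReal.ofReal s * (∫⁻ t in Ioi T,
            ENNReal.ofReal (mehler N t x y * t ^ (-s / 2 - 1))) := mul_le_mul_right h2 _
      _ ≤ ENNReal.ofReal s * Kker N s x y := by
          refine mul_le_mul_right ?_ _
          rw [kker_split N s hT0 x y]
          exact le_add_self
  -- limits of the bounds
  have hTpow : Tendsto (fun s : ℝ => ENNReal.ofReal (2 * T ^ (-s / 2)))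
      (nhdsWithin 0 (Ioi 0)) (nhds (ENNReal.ofReal 2)) := by
    have hc : Continuous fun s : ℝ => 2 * Real.exp (Real.log T * (-s / 2)) :=
      continuous_const.mul (Real.continuous_exp.comp
        (continuous_const.mul (continuous_neg.div_const 2)))
    have heq : (fun s : ℝ => 2 * T ^ (-s / 2))
        = fun s : ℝ => 2 * Real.exp (Real.log T * (-s / 2)) := by
      funext s; rw [Real.rpow_def_of_pos hT0]
    have h0 : Tendsto (fun s : ℝ => 2 * T ^ (-s / 2)) (nhdsWithin 0 (Ioi 0)) (nhds 2) := by
      rw [heq]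
      apply tendsto_nhdsWithin_of_tendsto_nhds
      exact hc.tendsto' 0 2 (by simp)
    exact (ENNReal.continuous_ofReal.tendsto 2).comp h0
  have hsC : Tendsto (fun s : ℝ => ENNReal.ofReal s * C) (nhdsWithin 0 (Ioi 0)) (nhds 0) := by
    have h0 : Tendsto (fun s : ℝ => ENNReal.ofReal s) (nhdsWithin 0 (Ioi 0)) (nhds 0) := by
      apply tendsto_nhdsWithin_of_tendsto_nhds
      exact (ENNReal.continuous_ofReal.tendsto' 0 0 (by simp))
    simpa using ENNReal.Tendsto.mul_const h0 (Or.inr hC_ne_top)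
  have hU : Tendsto (fun s : ℝ => ENNReal.ofReal s * C
      + ENNReal.ofReal (1 + δ) * ENNReal.ofReal (2 * T ^ (-s / 2)))
      (nhdsWithin 0 (Ioi 0)) (nhds (ENNReal.ofReal (1 + δ) * ENNReal.ofReal 2)) := by
    simpa using hsC.add (ENNReal.Tendsto.const_mul hTpow (Or.inr ENNReal.ofReal_ne_top))
  have hL : Tendsto (fun s : ℝ => ENNReal.ofReal (1 - δ) * ENNReal.ofReal (2 * T ^ (-s / 2)))
      (nhdsWithin 0 (Ioi 0)) (nhds (ENNReal.ofReal (1 - δ) * ENNReal.ofReal 2)) :=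
    ENNReal.Tendsto.const_mul hTpow (Or.inr ENNReal.ofReal_ne_top)
  -- compare the limits with 2 ± εr
  have hUlim_lt : ENNReal.ofReal (1 + δ) * ENNReal.ofReal 2 < 2 + εr := by
    rw [← ENNReal.ofReal_mul (by linarith)]
    have : (2:ENNReal) + εr = ENNReal.ofReal (2 + d) := by
      rw [ENNReal.ofReal_add (by norm_num) hd_pos.le, hofReal_d]
      norm_num
    rw [this]
    apply ENNReal.ofReal_lt_ofReal_iff (by linarith) |>.2
    rw [hδ_def]; linarith
  have hLlim_gt : 2 - εr < ENNReal.ofReal (1 - δ) * ENNReal.ofReal 2 := by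
    rw [← ENNReal.ofReal_mul (by linarith)]
    have h2 : (2:ENNReal) - εr = ENNReal.ofReal (2 - d) := by
      rw [ENNReal.ofReal_sub _ hd_pos.le, hofReal_d]
      norm_num
    rw [h2]
    apply ENNReal.ofReal_lt_ofReal_iff (by nlinarith) |>.2
    rw [hδ_def]; nlinarith
  have hUev := hU.eventually_lt_const hUlim_lt
  have hLev := hL.eventually_const_lt hLlim_gt
  have hmem : Ioc (0:ℝ) s₀ ∈ nhdsWithin (0:ℝ) (Ioi 0) := Ioc_mem_nhdsGT_of_mem ⟨le_refl 0, hs₀⟩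
  filter_upwards [hUev, hLev, hmem] with s h1 h2 hs
  constructor
  · calc 2 - ε ≤ 2 - εr := tsub_le_tsub_left hεr_le 2
      _ ≤ ENNReal.ofReal (1 - δ) * ENNReal.ofReal (2 * T ^ (-s / 2)) := h2.le
      _ ≤ ENNReal.ofReal s * Kker N s x y := hLb s hs.1
  · calc ENNReal.ofReal s * Kker N s x y
        ≤ _ := hUb s hs.1 hs.2
      _ ≤ 2 + εr := h1.le
      _ ≤ 2 + ε := add_le_add_right hεr_le 2

lemma Bfn_nonneg (N : ℕ) (x y : EuclideanSpace ℝ (Fin N)) : 0 ≤ Bfn N x y := by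
  unfold Bfn
  have h2 : (0:ℝ) ≤ 1 - Real.exp (-2) := by have := exp_neg_two_le_half; linarith
  exact mul_nonneg (Real.rpow_nonneg h2 _) (Real.exp_nonneg _)

lemma kker_bound (N : ℕ) {s s₀ : ℝ} (hs : 0 < s) (hss₀ : s ≤ s₀)
    (x y : EuclideanSpace ℝ (Fin N)) :
    ENNReal.ofReal s * Kker N s x y
      ≤ ENNReal.ofReal s₀ * Kker N s₀ x y + ENNReal.ofReal (2 * Bfn N x y) := by
  rw [kker_split N s one_pos x y, mul_add]
  refine add_le_add ?_ ?_
  · exact mul_le_mul' (ENNReal.ofReal_le_ofReal hss₀) (lint_Ioc01_le N hs hss₀ x y)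
  · have h2 := lint_IoiT_le N one_pos hs x y (Bfn_nonneg N x y)
      (fun t ht => mehler_le_Bfn N ht x y)
    refine (mul_le_mul_right h2 _).trans_eq ?_
    rw [mul_left_comm, mul_ofReal_two_div s _ hs (by rw [Real.one_rpow]; norm_num)]
    rw [Real.one_rpow, ← ENNReal.ofReal_mul (Bfn_nonneg N x y)]
    rw [mul_one]
    congr 1
    ring

lemma kker_measurable (N : ℕ) (s : ℝ) :
    Measurable fun z : EuclideanSpace ℝ (Fin N) × EuclideanSpace ℝ (Fin N) =>
      Kker N s z.1 z.2 :=
  Measurable.lintegral_prod_right' (mehler_uncurry_measurable N s)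

lemma integrable_gauss_exp (N : ℕ) {b : ℝ} (hb : 0 < b) :
    Integrable (fun v : EuclideanSpace ℝ (Fin N) => Real.exp (-b * ‖v‖ ^ 2)) := by
  have hC := GaussianFourier.integrable_cexp_neg_mul_sq_norm_add
    (V := EuclideanSpace ℝ (Fin N)) (b := (b : ℂ)) (by simpa using hb) 0 0
  have := hC.re
  refine this.congr (ae_of_all _ fun v => ?_)
  have harg : -(b:ℂ) * (‖v‖:ℂ) ^ 2 + 0 * (inner ℝ (0 : EuclideanSpace ℝ (Fin N)) v : ℝ)
      = ((-b * ‖v‖ ^ 2 : ℝ) : ℂ) := by push_cast; ring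
  show RCLike.re (Complex.exp _) = _
  rw [harg, RCLike.re_eq_complex_re]
  exact (Complex.exp_ofReal_re _)

lemma gauss_lintegral_exp_lt_top (N : ℕ) {a : ℝ} (ha : a < 1/2) :
    ∫⁻ x, ENNReal.ofReal (Real.exp (a * ‖x‖ ^ 2)) ∂(gaussMeasure N) < ⊤ := by
  have hmd : Measurable fun x : EuclideanSpace ℝ (Fin N) =>
      ENNReal.ofReal (gaussDensity N x) := by
    apply ENNReal.measurable_ofReal.comp
    exact measurable_const.mul ((((measurable_norm.pow measurable_const).neg).div_const 2).exp)
  have hmg : Measurable fun x : EuclideanSpace ℝ (Fin N) =>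
      ENNReal.ofReal (Real.exp (a * ‖x‖ ^ 2)) := by
    apply ENNReal.measurable_ofReal.comp
    exact ((measurable_norm.pow measurable_const).const_mul a).exp
  unfold gaussMeasure
  rw [lintegral_withDensity_eq_lintegral_mul volume hmd hmg]
  have heq : ∀ x : EuclideanSpace ℝ (Fin N),
      (ENNReal.ofReal (gaussDensity N x) * ENNReal.ofReal (Real.exp (a * ‖x‖ ^ 2)))
        = ENNReal.ofReal ((2 * π) ^ (-(N : ℝ) / 2) * Real.exp (-(1/2 - a) * ‖x‖ ^ 2)) := by
    intro x
    rw [← ENNReal.ofReal_mul (by unfold gaussDensity; positivity)]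
    congr 1
    unfold gaussDensity
    rw [mul_assoc, ← Real.exp_add]
    congr 2
    ring
  simp only [Pi.mul_apply, heq]
  have hint : Integrable (fun x : EuclideanSpace ℝ (Fin N) =>
      (2 * π) ^ (-(N : ℝ) / 2) * Real.exp (-(1/2 - a) * ‖x‖ ^ 2)) :=
    (integrable_gauss_exp N (by linarith)).const_mul _
  have hnn : 0 ≤ᵐ[volume] fun x : EuclideanSpace ℝ (Fin N) =>
      (2 * π) ^ (-(N : ℝ) / 2) * Real.exp (-(1/2 - a) * ‖x‖ ^ 2) :=
    ae_of_all _ fun x => by positivity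
  rw [← ofReal_integral_eq_lintegral_ofReal hint hnn]
  exact ENNReal.ofReal_lt_top

lemma exp_neg_one_lt_half : Real.exp (-1) < 1/2 := by
  have h : (2:ℝ) < Real.exp 1 := by
    have := Real.exp_one_gt_d9
    linarith
  rw [Real.exp_neg]
  rw [inv_lt_comm₀ (by positivity) (by norm_num)]
  simpa using h

lemma bfn_prod_bound (N : ℕ) (x y : EuclideanSpace ℝ (Fin N)) :
    ENNReal.ofReal (2 * Bfn N x y)
      ≤ ENNReal.ofReal (2 * (1 - Real.exp (-2)) ^ (-(N:ℝ)/2)) *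
        (ENNReal.ofReal (Real.exp (Real.exp (-1) * ‖x‖^2)) *
          ENNReal.ofReal (Real.exp (Real.exp (-1) * ‖y‖^2))) := by
  have hc₀ : (0:ℝ) ≤ (1 - Real.exp (-2)) ^ (-(N:ℝ)/2) := by
    have h2 : (0:ℝ) ≤ 1 - Real.exp (-2) := by have := exp_neg_two_le_half; linarith
    exact Real.rpow_nonneg h2 _
  rw [← ENNReal.ofReal_mul (by positivity), ← ENNReal.ofReal_mul (by positivity)]
  apply ENNReal.ofReal_le_ofReal
  unfold Bfn
  rw [mul_assoc, ← Real.exp_add]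
  rw [← mul_assoc]
  apply mul_le_mul_of_nonneg_left ?_ (by positivity)
  apply Real.exp_le_exp.2
  nlinarith [sq_nonneg (‖x‖ - ‖y‖), Real.exp_pos (-1), norm_nonneg x, norm_nonneg y]

instance gaussMeasure_sfinite (N : ℕ) : SFinite (gaussMeasure N) := by
  unfold gaussMeasure; infer_instance

/-- For the whole-space fractional Gaussian perimeter
$P^γ_s(E) = ∫_E ∫_{E^c} K_s(x,y) dγ(y) dγ(x)$,
if $P^γ_{s_0}(E)<∞$ for some $s_0∈(0,1)$ then
$\lim_{s→0^+} s P^γ_s(E) = 2γ(E)γ(E^c)$. -/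
theorem stmt_4 (N : ℕ) (E : Set (EuclideanSpace ℝ (Fin N))) (hE : MeasurableSet E)
    (s₀ : ℝ) (hs₀ : s₀ ∈ Set.Ioo (0 : ℝ) 1) (hfin : Lgamma N s₀ E Eᶜ < ⊤) :
    Filter.Tendsto (fun s : ℝ => ENNReal.ofReal s * Lgamma N s E Eᶜ)
      (nhdsWithin 0 (Set.Ioi 0))
      (nhds (2 * gaussMeasure N E * gaussMeasure N Eᶜ)) := by
  obtain ⟨hs₀pos, _hs₀lt1⟩ := hs₀
  have hkm := kker_measurable N
  set μp := ((gaussMeasure N).restrict E).prod ((gaussMeasure N).restrict Eᶜ) with hμp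
  have hLeq : ∀ s : ℝ, Lgamma N s E Eᶜ = ∫⁻ z, Kker N s z.1 z.2 ∂μp := by
    intro s
    rw [hμp, lintegral_prod _ (hkm s).aemeasurable]
    rfl
  set bound : EuclideanSpace ℝ (Fin N) × EuclideanSpace ℝ (Fin N) → ENNReal :=
    fun z => ENNReal.ofReal s₀ * Kker N s₀ z.1 z.2 + ENNReal.ofReal (2 * Bfn N z.1 z.2)
    with hbound_def
  have hmexp : Measurable fun x : EuclideanSpace ℝ (Fin N) =>
      ENNReal.ofReal (Real.exp (Real.exp (-1) * ‖x‖ ^ 2)) := by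
    apply ENNReal.measurable_ofReal.comp
    exact ((measurable_norm.pow measurable_const).const_mul _).exp
  have h_fin : ∫⁻ z, bound z ∂μp ≠ ⊤ := by
    rw [hbound_def]
    rw [lintegral_add_left ((hkm s₀).const_mul _)]
    apply ENNReal.add_ne_top.2
    constructor
    · rw [lintegral_const_mul' _ _ ENNReal.ofReal_ne_top, ← hLeq s₀]
      exact ENNReal.mul_ne_top ENNReal.ofReal_ne_top hfin.ne
    · have hle : ∫⁻ z, ENNReal.ofReal (2 * Bfn N z.1 z.2) ∂μp
          ≤ ENNReal.ofReal (2 * (1 - Real.exp (-2)) ^ (-(N:ℝ)/2)) *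
            ((∫⁻ x, ENNReal.ofReal (Real.exp (Real.exp (-1) * ‖x‖^2))
                ∂((gaussMeasure N).restrict E)) *
              ∫⁻ y, ENNReal.ofReal (Real.exp (Real.exp (-1) * ‖y‖^2))
                ∂((gaussMeasure N).restrict Eᶜ)) := by
        calc ∫⁻ z, ENNReal.ofReal (2 * Bfn N z.1 z.2) ∂μp
            ≤ ∫⁻ z, ENNReal.ofReal (2 * (1 - Real.exp (-2)) ^ (-(N:ℝ)/2)) *
                (ENNReal.ofReal (Real.exp (Real.exp (-1) * ‖z.1‖^2)) *
                  ENNReal.ofReal (Real.exp (Real.exp (-1) * ‖z.2‖^2))) ∂μp :=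
              lintegral_mono fun z => bfn_prod_bound N z.1 z.2
          _ = ENNReal.ofReal (2 * (1 - Real.exp (-2)) ^ (-(N:ℝ)/2)) *
                ∫⁻ z, ENNReal.ofReal (Real.exp (Real.exp (-1) * ‖z.1‖^2)) *
                  ENNReal.ofReal (Real.exp (Real.exp (-1) * ‖z.2‖^2)) ∂μp :=
              lintegral_const_mul' _ _ ENNReal.ofReal_ne_top
          _ = _ := by
              rw [lintegral_prod_mul hmexp.aemeasurable hmexp.aemeasurable]
      apply ne_top_of_le_ne_top ?_ hle
      apply ENNReal.mul_ne_top ENNReal.ofReal_ne_top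
      apply ENNReal.mul_ne_top
      · exact (lt_of_le_of_lt (lintegral_mono' Measure.restrict_le_self le_rfl)
          (gauss_lintegral_exp_lt_top N _root_.exp_neg_one_lt_half)).ne
      · exact (lt_of_le_of_lt (lintegral_mono' Measure.restrict_le_self le_rfl)
          (gauss_lintegral_exp_lt_top N _root_.exp_neg_one_lt_half)).ne
  have h_lim : ∀ᵐ z ∂μp, Tendsto (fun s : ℝ => ENNReal.ofReal s * Kker N s z.1 z.2)
      (nhdsWithin 0 (Ioi 0)) (nhds ((fun _ => (2:ENNReal)) z)) := by
    have hae : ∀ᵐ z ∂μp, Kker N s₀ z.1 z.2 < ⊤ := by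
      apply ae_lt_top (hkm s₀)
      rw [← hLeq s₀]
      exact hfin.ne
    filter_upwards [hae] with z hz
    exact key_pointwise N hs₀pos z.1 z.2 hz.ne
  have h_bound : ∀ᶠ s in nhdsWithin (0:ℝ) (Ioi 0), ∀ᵐ z ∂μp,
      ENNReal.ofReal s * Kker N s z.1 z.2 ≤ bound z := by
    have hmem : Ioc (0:ℝ) s₀ ∈ nhdsWithin (0:ℝ) (Ioi 0) :=
      Ioc_mem_nhdsGT_of_mem ⟨le_refl 0, hs₀pos⟩
    exact eventually_of_mem hmem fun s hs =>
      ae_of_all _ fun z => kker_bound N hs.1 hs.2 z.1 z.2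
  have hF_meas : ∀ᶠ s in nhdsWithin (0:ℝ) (Ioi 0),
      Measurable fun z : EuclideanSpace ℝ (Fin N) × EuclideanSpace ℝ (Fin N) =>
        ENNReal.ofReal s * Kker N s z.1 z.2 :=
    Eventually.of_forall fun s => (hkm s).const_mul _
  have hmain := tendsto_lintegral_filter_of_dominated_convergence bound hF_meas h_bound h_fin h_lim
  have hsum : ∀ s : ℝ, ∫⁻ z, ENNReal.ofReal s * Kker N s z.1 z.2 ∂μp
      = ENNReal.ofReal s * Lgamma N s E Eᶜ := by
    intro s
    rw [lintegral_const_mul' _ _ ENNReal.ofReal_ne_top, hLeq s]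
  have hconst : ∫⁻ _z, (2:ENNReal) ∂μp = 2 * gaussMeasure N E * gaussMeasure N Eᶜ := by
    rw [lintegral_const, hμp, ← univ_prod_univ, Measure.prod_prod,
      Measure.restrict_apply_univ, Measure.restrict_apply_univ, mul_assoc]
  simp only [hsum, hconst] at hmain
  exact hmain
end

section
/- For any x, y ∈ ℝ^N with x ≠ y and any s ∈ (0,1), K_s(x,y) ≥ C_{N,s}/|x-y|^{N+s}, where C_{N,s} := 2^{s+N/2} Γ((s+N)/2). -/
open MeasureTheory Real Set Filter

/-- Integrability and value of `∫ t in Ioi 0, t ^ (-a-1) * exp (-(c/t))`. -/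
lemma aux_int (a c : ℝ) (ha : 0 < a) (hc : 0 < c) :
    IntegrableOn (fun t : ℝ => t ^ (-a - 1) * Real.exp (-(c / t))) (Ioi 0) ∧
    ∫ t in Ioi (0:ℝ), t ^ (-a - 1) * Real.exp (-(c / t)) = (1 / c) ^ a * Real.Gamma a := by
  have base : IntegrableOn (fun u : ℝ => u ^ (a - 1) * Real.exp (-(c * u))) (Ioi 0) := by
    have h0 : IntegrableOn (fun x : ℝ => Real.exp (-x) * x ^ (a - 1)) (Ioi 0) :=
      Real.GammaIntegral_convergent ha
    have h1 : IntegrableOn (fun x : ℝ => Real.exp (-(c * x)) * (c * x) ^ (a - 1)) (Ioi 0) := by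
      have := (integrableOn_Ioi_comp_mul_left_iff
        (fun x : ℝ => Real.exp (-x) * x ^ (a - 1)) 0 hc).mpr (by simpa using h0)
      simpa [mul_zero] using this
    have h2 := h1.const_mul (c ^ (1 - a))
    apply IntegrableOn.congr_fun h2 ?_ measurableSet_Ioi
    intro x hx
    have hx0 : (0:ℝ) < x := hx
    have hcc : c ^ (1 - a) * c ^ (a - 1) = 1 := by
      rw [← Real.rpow_add hc]; norm_num
    simp only
    rw [Real.mul_rpow hc.le hx0.le]
    linear_combination (Real.exp (-(c*x)) * x ^ (a-1)) * hcc
  have heq : Set.EqOn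
      (fun x : ℝ => (|(-1:ℝ)| * x ^ ((-1:ℝ) - 1)) •
        ((x ^ (-1:ℝ)) ^ (a - 1) * Real.exp (-(c * x ^ (-1:ℝ)))))
      (fun t : ℝ => t ^ (-a - 1) * Real.exp (-(c / t))) (Ioi 0) := by
    intro t ht
    have ht0 : (0:ℝ) < t := ht
    simp only [smul_eq_mul, abs_neg, abs_one, one_mul]
    rw [← Real.rpow_mul ht0.le, Real.rpow_neg_one, ← div_eq_mul_inv]
    have hmerge : t ^ ((-1:ℝ)*(a-1)) * t ^ ((-1:ℝ)-1) = t ^ (-a-1) := by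
      rw [← Real.rpow_add ht0]; congr 1; ring
    linear_combination Real.exp (-(c/t)) * hmerge
  constructor
  · have key := (integrableOn_Ioi_comp_rpow_iff
      (fun u : ℝ => u ^ (a - 1) * Real.exp (-(c * u))) (p := (-1:ℝ)) (by norm_num)).mpr base
    exact key.congr_fun heq measurableSet_Ioi
  · have hval := integral_comp_rpow_Ioi
      (fun u : ℝ => u ^ (a - 1) * Real.exp (-(c * u))) (p := (-1:ℝ)) (by norm_num)
    rw [setIntegral_congr_fun measurableSet_Ioi heq] at hval
    rw [hval, Real.integral_rpow_mul_exp_neg_mul_Ioi ha hc]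

lemma const_eq (N : ℕ) (s r : ℝ) (hr : 0 < r) :
    (2:ℝ) ^ (-(N:ℝ)/2) * ((1 / (r^2/4)) ^ ((s + (N:ℝ))/2) * Real.Gamma ((s + N)/2))
      = 2 ^ (s + (N:ℝ)/2) * Real.Gamma ((s + N)/2) / r ^ ((N:ℝ) + s) := by
  have h14 : (1 / (r^2/4) : ℝ) = 4 / r^2 := by
    rw [one_div_div]
  have hdiv : ((4:ℝ) / r^2) ^ ((s + (N:ℝ))/2)
      = (4:ℝ) ^ ((s + (N:ℝ))/2) / (r^2) ^ ((s + (N:ℝ))/2) :=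
    Real.div_rpow (by norm_num) (sq_nonneg r) _
  have e4 : (4:ℝ) ^ ((s + (N:ℝ))/2) = 2 ^ (s + (N:ℝ)) := by
    rw [show (4:ℝ) = (2:ℝ) ^ (2:ℝ) by
        rw [show ((2:ℝ):ℝ) = ((2:ℕ):ℝ) by norm_num, Real.rpow_natCast]; norm_num,
      ← Real.rpow_mul (by norm_num)]
    congr 1; ring
  have er : ((r^2:ℝ)) ^ ((s + (N:ℝ))/2) = r ^ ((N:ℝ) + s) := by
    rw [← Real.rpow_natCast r 2, ← Real.rpow_mul hr.le]
    congr 1; push_cast; ring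
  have e2 : (2:ℝ) ^ (-(N:ℝ)/2) * 2 ^ (s + (N:ℝ)) = 2 ^ (s + (N:ℝ)/2) := by
    rw [← Real.rpow_add two_pos]; congr 1; ring
  rw [h14, hdiv, e4, er, ← e2]
  ring

lemma mehler_lower (N : ℕ) (x y : EuclideanSpace ℝ (Fin N)) (s : ℝ) {t : ℝ} (ht : 0 < t) :
    (2:ℝ) ^ (-(N:ℝ)/2) * (t ^ (-((s + (N:ℝ))/2) - 1) * Real.exp (-(‖x - y‖^2/4 / t)))
      ≤ mehler N t x y * t ^ (-s/2 - 1) := by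
  set u := Real.exp (-t) with hu
  set v := Real.exp (-2*t) with hv
  have hupos : 0 < u := Real.exp_pos _
  have hvpos : 0 < v := Real.exp_pos _
  have h1 : 0 < 1 - v := by
    have : v < 1 := Real.exp_lt_one_iff.mpr (by linarith)
    linarith
  have h2 : 1 - v ≤ 2*t := by
    have := Real.add_one_le_exp (-2*t)
    rw [← hv] at this; linarith
  have hvu : v ≤ u := Real.exp_le_exp.mpr (by linarith)
  have huv : v = u * u := by rw [hu, hv, ← Real.exp_add]; ring_nf
  have hue : Real.exp t * u = 1 := by rw [hu, ← Real.exp_add]; simp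
  have hsinh : 2*t ≤ Real.exp t - u := by
    have h := Real.self_le_sinh_iff.mpr ht.le
    rw [Real.sinh_eq] at h; rw [hu]; linarith
  have h2tu : 2*t*u ≤ 1 - v := by nlinarith
  -- the quadratic form bound
  have hnormsq : ‖x - y‖^2 = ‖x‖^2 - 2 * (inner ℝ x y : ℝ) + ‖y‖^2 := norm_sub_sq_real x y
  have hE : v * ‖x‖^2 - 2*u*(inner ℝ x y : ℝ) + v * ‖y‖^2 ≤ u * ‖x - y‖^2 := by
    have hprod : 0 ≤ (u - v) * (‖x‖^2 + ‖y‖^2) :=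
      mul_nonneg (by linarith) (by positivity)
    nlinarith [hprod]
  have hdiv : (v * ‖x‖^2 - 2*u*(inner ℝ x y : ℝ) + v * ‖y‖^2) / (2 * (1 - v))
      ≤ ‖x - y‖^2/4 / t := by
    rw [div_div, div_le_div_iff₀ (by linarith) (by linarith)]
    nlinarith [mul_le_mul_of_nonneg_right hE (mul_pos (by norm_num : (0:ℝ)<4) ht).le,
      mul_le_mul_of_nonneg_right h2tu (sq_nonneg ‖x - y‖),
      mul_pos hupos ht]
  have key1 : (2*t) ^ (-(N:ℝ)/2) ≤ (1 - v) ^ (-(N:ℝ)/2) := by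
    apply Real.rpow_le_rpow_of_nonpos h1 h2
    have : (0:ℝ) ≤ (N:ℝ)/2 := by positivity
    linarith
  have key2 : Real.exp (-(‖x - y‖^2/4 / t)) ≤
      Real.exp (-(v * ‖x‖^2 - 2*u*(inner ℝ x y : ℝ) + v * ‖y‖^2) / (2 * (1 - v))) := by
    apply Real.exp_le_exp.mpr
    rw [neg_div]
    linarith
  have hrw : (2:ℝ) ^ (-(N:ℝ)/2) * (t ^ (-((s + (N:ℝ))/2) - 1) * Real.exp (-(‖x - y‖^2/4 / t)))
      = ((2*t) ^ (-(N:ℝ)/2) * Real.exp (-(‖x - y‖^2/4 / t))) * t ^ (-s/2 - 1) := by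
    rw [Real.mul_rpow (by norm_num) ht.le,
      show (-((s + (N:ℝ))/2) - 1 : ℝ) = (-(N:ℝ)/2) + (-s/2 - 1) by ring,
      Real.rpow_add ht]
    ring
  rw [hrw]
  unfold mehler
  rw [← hu, ← hv]
  apply mul_le_mul_of_nonneg_right _ (Real.rpow_nonneg ht.le _)
  exact mul_le_mul key1 key2 (Real.exp_pos _).le (Real.rpow_nonneg h1.le _)

/-- lower bound for the kernel:
$K_s(x,y) ≥ C_{N,s}/|x-y|^{N+s}$ with $C_{N,s}=2^{s+N/2}Γ((s+N)/2)$. -/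
theorem stmt_5 (N : ℕ) (x y : EuclideanSpace ℝ (Fin N)) (hxy : x ≠ y)
    (s : ℝ) (hs : s ∈ Set.Ioo (0 : ℝ) 1) :
    ENNReal.ofReal ((2 : ℝ) ^ (s + (N : ℝ) / 2) * Real.Gamma ((s + N) / 2) /
        ‖x - y‖ ^ ((N : ℝ) + s))
      ≤ Kker N s x y := by
  obtain ⟨hs0, hs1⟩ := hs
  have hr : (0:ℝ) < ‖x - y‖ := by
    rw [norm_pos_iff]; exact sub_ne_zero.mpr hxy
  have ha : 0 < (s + (N:ℝ)) / 2 := by positivity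
  have hc : 0 < ‖x - y‖ ^ 2 / 4 := by positivity
  obtain ⟨intg, hval⟩ := aux_int ((s + (N:ℝ))/2) (‖x - y‖^2/4) ha hc
  set g : ℝ → ℝ := fun t =>
    (2:ℝ) ^ (-(N:ℝ)/2) * (t ^ (-((s + (N:ℝ))/2) - 1) * Real.exp (-(‖x - y‖^2/4 / t))) with hg
  have hgint : IntegrableOn g (Ioi 0) := intg.const_mul _
  have hg0 : 0 ≤ᵐ[volume.restrict (Ioi 0)] g := by
    filter_upwards [ae_restrict_mem measurableSet_Ioi] with t ht
    have ht0 : (0:ℝ) < t := ht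
    rw [hg]
    positivity
  have hmeas : Measurable fun t : ℝ => ENNReal.ofReal (mehler N t x y * t ^ (-s/2 - 1)) := by
    apply Measurable.ennreal_ofReal
    apply Measurable.mul
    · unfold mehler; fun_prop
    · fun_prop
  have hintval : ∫ t in Ioi (0:ℝ), g t
      = (2:ℝ) ^ (-(N:ℝ)/2) * ((1/(‖x - y‖^2/4)) ^ ((s + (N:ℝ))/2) * Real.Gamma ((s + N)/2)) := by
    rw [hg, integral_const_mul, hval]
  calc
    ENNReal.ofReal ((2 : ℝ) ^ (s + (N : ℝ) / 2) * Real.Gamma ((s + N) / 2) /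
        ‖x - y‖ ^ ((N : ℝ) + s))
        = ENNReal.ofReal (∫ t in Ioi (0:ℝ), g t) := by
          rw [hintval, const_eq N s ‖x - y‖ hr]
    _ = ∫⁻ t in Ioi (0:ℝ), ENNReal.ofReal (g t) :=
          ofReal_integral_eq_lintegral_ofReal hgint hg0
    _ ≤ ∫⁻ t in Ioi (0:ℝ), ENNReal.ofReal (mehler N t x y * t ^ (-s/2 - 1)) := by
          apply setLIntegral_mono hmeas
          intro t ht
          exact ENNReal.ofReal_le_ofReal (mehler_lower N x y s ht)
    _ = Kker N s x y := rfl
end
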